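/- Let f : S_d → U_d (d ≥ 3) be a crossed homomorphism such that f(σ_i) = 0 for all adjacent transpositions σ_i with i ≠ 1. Then there exists an integer c such that f(σ_1) = c·Σ_{j=3}^{d}(e_{1,j} − e_{2,j}), and f is the principal crossed homomorphism associated to m = −c·Σ_{j=2}^{d} e_{1,j}. -/

import Mathlib

open Pointwise

/-- The set of 2-element subsets of `{1, ..., d}`, the basis of `U_d`. -/
abbrev TwoSubsets (d : ℕ) : Type := {s : Finset (Fin d) // s.card = 2}

/-- `S_d` acts on 2-element subsets by `τ • {i,j} = {τ i, τ j}`. -/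
instance (d : ℕ) : MulAction (Equiv.Perm (Fin d)) (TwoSubsets d) where
  smul σ s := ⟨σ • s.1, by rw [Finset.card_smul_finset]; exact s.2⟩
  one_smul s := Subtype.ext (one_smul _ s.1)
  mul_smul a b s := Subtype.ext (mul_smul a b s.1)

/-- The basis element `e_{i,j}` of `U_d` (and `0` if `i = j`). -/
noncomputable def pairElt {d : ℕ} (i j : Fin d) : TwoSubsets d →₀ ℤ :=
  if h : i ≠ j then Finsupp.single ⟨{i, j}, Finset.card_pair h⟩ 1 else 0

variable {d : ℕ}

noncomputable abbrev rp (d : ℕ) : Representation ℤ (Equiv.Perm (Fin d)) (TwoSubsets d →₀ ℤ) where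
  toFun g := Finsupp.lmapDomain ℤ ℤ (g • ·)
  map_one' := by ext; simp
  map_mul' x y := by ext; simp [mul_smul, ← Finsupp.mapDomain_comp, Function.comp_def]

lemma rp_single (τ : Equiv.Perm (Fin d)) (x : TwoSubsets d) (r : ℤ) :
    rp d τ (Finsupp.single x r) = Finsupp.single (τ • x) r := by
  simp [rp, Finsupp.mapDomain_single]

lemma rp_apply_pt (τ : Equiv.Perm (Fin d)) (v : TwoSubsets d →₀ ℤ) (s : TwoSubsets d) :
    (rp d τ v) s = v (τ⁻¹ • s) := by
  have := Finsupp.mapDomain_apply (MulAction.injective τ) v (τ⁻¹ • s)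
  rw [smul_inv_smul] at this
  exact this

lemma rp_bridge (τ : Equiv.Perm (Fin d)) (x : TwoSubsets d →₀ ℤ) :
    (Representation.ofMulAction ℤ (Equiv.Perm (Fin d)) (TwoSubsets d) τ
      (MonoidAlgebra.ofCoeff x)).coeff = rp d τ x := by
  rw [Representation.ofMulAction_def]; rfl


def mkp {d : ℕ} (a b : Fin d) (h : a ≠ b) : TwoSubsets d := ⟨{a, b}, Finset.card_pair h⟩

lemma smul_mkp (τ : Equiv.Perm (Fin d)) (a b : Fin d) (h : a ≠ b) :
    τ • mkp a b h = mkp (τ a) (τ b) (fun he => h (τ.injective he)) := by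
  apply Subtype.ext
  show τ • ({a, b} : Finset (Fin d)) = {τ a, τ b}
  simp [Finset.smul_finset_insert, Finset.smul_finset_singleton, Equiv.Perm.smul_def]

lemma mkp_congr {a b a' b' : Fin d} (h : a ≠ b) (h' : a' ≠ b') (ha : a = a') (hb : b = b') :
    mkp a b h = mkp a' b' h' := by subst ha; subst hb; rfl

lemma mkp_comm (a b : Fin d) (h : a ≠ b) : mkp a b h = mkp b a (Ne.symm h) :=
  Subtype.ext (Finset.pair_comm a b)

lemma twoSubsets_eq_pair_iff (s : TwoSubsets d) {i j : Fin d} (hij : i ≠ j) :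
    s.1 = {i, j} ↔ i ∈ s.1 ∧ j ∈ s.1 := by
  constructor
  · rintro h; rw [h]; simp
  · rintro ⟨h1, h2⟩
    refine (Finset.eq_of_subset_of_card_le ?_ ?_).symm
    · intro x hx
      rcases Finset.mem_insert.1 hx with rfl | hx
      · exact h1
      · rw [Finset.mem_singleton] at hx; subst hx; exact h2
    · rw [s.2, Finset.card_pair hij]

lemma pairElt_apply (i j : Fin d) (s : TwoSubsets d) :
    pairElt i j s = if i ∈ s.1 ∧ j ∈ s.1 ∧ i ≠ j then 1 else 0 := by
  unfold pairElt
  rcases eq_or_ne i j with h | h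
  · simp [h]
  · rw [dif_pos h, Finsupp.single_apply]
    by_cases hs : s.1 = {i, j}
    · rw [if_pos, if_pos]
      · exact ⟨((twoSubsets_eq_pair_iff s h).1 hs).1, ((twoSubsets_eq_pair_iff s h).1 hs).2, h⟩
      · exact (Subtype.ext hs).symm
    · rw [if_neg, if_neg]
      · intro ⟨h1, h2, _⟩; exact hs ((twoSubsets_eq_pair_iff s h).2 ⟨h1, h2⟩)
      · intro he; exact hs (congrArg Subtype.val he).symm


lemma part1 (d : ℕ) (hd : 3 ≤ d) (v : TwoSubsets d →₀ ℤ)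
    (hσ : ∀ s : TwoSubsets d, v (Equiv.swap (⟨0, lt_of_lt_of_le (by norm_num) hd⟩ : Fin d) ⟨1, lt_of_lt_of_le (by norm_num) hd⟩ • s) = - v s)
    (ht : ∀ (k : ℕ) (h2 : 2 ≤ k) (hk : k + 1 < d) (s : TwoSubsets d),
      v (Equiv.swap (⟨k, by omega⟩ : Fin d) ⟨k+1, hk⟩ • s) = v s) :
    v = v (mkp (⟨0, lt_of_lt_of_le (by norm_num) hd⟩ : Fin d) ⟨2, by omega⟩
        (Fin.ne_of_val_ne (show 0 ≠ 2 by omega))) •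
      ∑ j ∈ Finset.univ.filter (fun j : Fin d => 2 ≤ j.val),
        (pairElt ⟨0, lt_of_lt_of_le (by norm_num) hd⟩ j - pairElt ⟨1, lt_of_lt_of_le (by norm_num) hd⟩ j) := by
  have h0 : (0 : ℕ) < d := by omega
  have h1 : (1 : ℕ) < d := by omega
  have h2d : (2 : ℕ) < d := by omega
  set e0 : Fin d := ⟨0, h0⟩ with he0
  set e1 : Fin d := ⟨1, h1⟩ with he1
  set e2 : Fin d := ⟨2, h2d⟩ with he2
  have hva0 : e0.val = 0 := rfl
  have hva1 : e1.val = 1 := rfl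
  have hva2 : e2.val = 2 := rfl
  have hne02 : e0 ≠ e2 := Fin.ne_of_val_ne (show 0 ≠ 2 by omega)
  set c : ℤ := v (mkp e0 e2 hne02) with hc
  have hgen0 : ∀ (a b : Fin d) (h : a ≠ b), 2 ≤ a.val → 2 ≤ b.val → v (mkp a b h) = 0 := by
    intro a b h ha hb
    have := hσ (mkp a b h)
    rw [smul_mkp, mkp_congr _ h
      (Equiv.swap_apply_of_ne_of_ne (Fin.ne_of_val_ne (show a.val ≠ 0 by omega))
        (Fin.ne_of_val_ne (show a.val ≠ 1 by omega)))
      (Equiv.swap_apply_of_ne_of_ne (Fin.ne_of_val_ne (show b.val ≠ 0 by omega))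
        (Fin.ne_of_val_ne (show b.val ≠ 1 by omega)))]
      at this
    omega
  have hne01 : e0 ≠ e1 := Fin.ne_of_val_ne (show 0 ≠ 1 by omega)
  have h01 : v (mkp e0 e1 hne01) = 0 := by
    have := hσ (mkp e0 e1 hne01)
    rw [smul_mkp, mkp_congr _ (Ne.symm hne01) (Equiv.swap_apply_left _ _)
      (Equiv.swap_apply_right _ _), ← mkp_comm e0 e1 hne01] at this
    omega
  have h0b : ∀ (b : Fin d) (h : e0 ≠ b), 2 ≤ b.val → v (mkp e0 b h) = c := by
    have key : ∀ (k : ℕ) (h2 : 2 ≤ k) (hk : k < d),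
        v (mkp e0 ⟨k, hk⟩ (Fin.ne_of_val_ne (show 0 ≠ k by omega))) = c := by
      intro k h2
      induction k, h2 using Nat.le_induction with
      | base => intro hk; rw [hc]
      | succ k hk2 ih =>
        intro hk
        have hkd : k < d := by omega
        have := ht k hk2 hk (mkp e0 ⟨k+1, hk⟩ (Fin.ne_of_val_ne (show 0 ≠ k + 1 by omega)))
        rw [smul_mkp, mkp_congr _
          (show e0 ≠ (⟨k, hkd⟩ : Fin d) from Fin.ne_of_val_ne (show 0 ≠ k by omega))
          (Equiv.swap_apply_of_ne_of_ne (Fin.ne_of_val_ne (show 0 ≠ k by omega))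
            (Fin.ne_of_val_ne (show 0 ≠ k + 1 by omega)))
          (Equiv.swap_apply_right _ _)] at this
        rw [← this]
        exact ih hkd
    intro b h hb
    have := key b.val hb b.isLt
    rwa [mkp_congr _ h rfl (Fin.ext rfl)] at this
  have h1b : ∀ (b : Fin d) (h : e1 ≠ b), 2 ≤ b.val → v (mkp e1 b h) = -c := by
    intro b h hb
    have hne0b : e0 ≠ b := Fin.ne_of_val_ne (show 0 ≠ b.val by omega)
    have := hσ (mkp e0 b hne0b)
    rw [smul_mkp, mkp_congr _ h (Equiv.swap_apply_left _ _)
      (Equiv.swap_apply_of_ne_of_ne (Fin.ne_of_val_ne (show b.val ≠ 0 by omega))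
        (Fin.ne_of_val_ne (show b.val ≠ 1 by omega)))] at this
    rw [this, h0b b hne0b hb]
  have main : ∀ (a b : Fin d) (hab : a ≠ b), a.val < b.val →
      v (mkp a b hab) =
      (c • ∑ j ∈ Finset.univ.filter (fun j : Fin d => 2 ≤ j.val),
        (pairElt e0 j - pairElt e1 j)) (mkp a b hab) := by
    intro a b hab hlt
    rw [Finsupp.smul_apply, Finsupp.finset_sum_apply]
    have hmem : ∀ x : Fin d, x ∈ (mkp a b hab).1 ↔ (x = a ∨ x = b) := by
      intro x
      show x ∈ ({a, b} : Finset (Fin d)) ↔ _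
      simp [Finset.mem_insert, Finset.mem_singleton]
    rcases Nat.lt_or_ge a.val 2 with ha2 | ha2
    · rcases Nat.eq_zero_or_pos a.val with ha0 | ha1
      · rcases Nat.lt_or_ge b.val 2 with hb2 | hb2
        · -- a = 0, b = 1
          have hsum : ∀ j ∈ Finset.univ.filter (fun j : Fin d => 2 ≤ j.val),
              (pairElt e0 j - pairElt e1 j) (mkp a b hab) = 0 := by
            intro j hj
            rw [Finset.mem_filter] at hj
            obtain ⟨-, hj2⟩ := hj
            rw [Finsupp.sub_apply, pairElt_apply, pairElt_apply]
            have c1 : ¬(e0 ∈ (mkp a b hab).1 ∧ j ∈ (mkp a b hab).1 ∧ e0 ≠ j) := by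
              simp only [hmem, Fin.ext_iff, ne_eq]; omega
            have c2 : ¬(e1 ∈ (mkp a b hab).1 ∧ j ∈ (mkp a b hab).1 ∧ e1 ≠ j) := by
              simp only [hmem, Fin.ext_iff, ne_eq]; omega
            rw [if_neg c1, if_neg c2, sub_zero]
          rw [Finset.sum_congr rfl hsum, Finset.sum_const_zero, smul_zero]
          have heq : mkp a b hab = mkp e0 e1 hne01 :=
            mkp_congr _ _ (Fin.ext (by omega)) (Fin.ext (by omega))
          rw [heq, h01]
        · -- a = 0, b ≥ 2
          have hsum : ∀ j ∈ Finset.univ.filter (fun j : Fin d => 2 ≤ j.val),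
              (pairElt e0 j - pairElt e1 j) (mkp a b hab) = if j = b then 1 else 0 := by
            intro j hj
            rw [Finset.mem_filter] at hj
            obtain ⟨-, hj2⟩ := hj
            rw [Finsupp.sub_apply, pairElt_apply, pairElt_apply]
            have c1 : (e0 ∈ (mkp a b hab).1 ∧ j ∈ (mkp a b hab).1 ∧ e0 ≠ j) ↔ j = b := by
              simp only [hmem, Fin.ext_iff, ne_eq]; omega
            have c2 : ¬(e1 ∈ (mkp a b hab).1 ∧ j ∈ (mkp a b hab).1 ∧ e1 ≠ j) := by
              simp only [hmem, Fin.ext_iff, ne_eq]; omega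
            rw [if_neg c2, sub_zero]
            simp only [c1]
          rw [Finset.sum_congr rfl hsum, Finset.sum_ite_eq' _ b (fun _ => (1:ℤ)),
            if_pos (by simp [Finset.mem_filter, hb2]), smul_eq_mul, mul_one]
          have heq : mkp a b hab = mkp e0 b (Fin.ne_of_val_ne (show 0 ≠ b.val by omega)) :=
            mkp_congr _ _ (Fin.ext (by omega)) rfl
          rw [heq, h0b b _ hb2]
      · -- a = 1
        have hb2 : 2 ≤ b.val := by omega
        have ha1' : a.val = 1 := by omega
        have hsum : ∀ j ∈ Finset.univ.filter (fun j : Fin d => 2 ≤ j.val),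
            (pairElt e0 j - pairElt e1 j) (mkp a b hab) = if j = b then -1 else 0 := by
          intro j hj
          rw [Finset.mem_filter] at hj
          obtain ⟨-, hj2⟩ := hj
          rw [Finsupp.sub_apply, pairElt_apply, pairElt_apply]
          have c1 : ¬(e0 ∈ (mkp a b hab).1 ∧ j ∈ (mkp a b hab).1 ∧ e0 ≠ j) := by
            simp only [hmem, Fin.ext_iff, ne_eq]; omega
          have c2 : (e1 ∈ (mkp a b hab).1 ∧ j ∈ (mkp a b hab).1 ∧ e1 ≠ j) ↔ j = b := by
            simp only [hmem, Fin.ext_iff, ne_eq]; omega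
          rw [if_neg c1, zero_sub]
          simp only [c2]
          split <;> norm_num
        rw [Finset.sum_congr rfl hsum, Finset.sum_ite_eq' _ b (fun _ => (-1:ℤ)),
          if_pos (by simp [Finset.mem_filter, hb2]), smul_eq_mul]
        have heq : mkp a b hab = mkp e1 b (Fin.ne_of_val_ne (show 1 ≠ b.val by omega)) :=
          mkp_congr _ _ (Fin.ext (by omega)) rfl
        rw [heq, h1b b _ hb2]
        ring
    · -- a ≥ 2
      have hb2 : 2 ≤ b.val := by omega
      have hsum : ∀ j ∈ Finset.univ.filter (fun j : Fin d => 2 ≤ j.val),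
          (pairElt e0 j - pairElt e1 j) (mkp a b hab) = 0 := by
        intro j hj
        rw [Finset.mem_filter] at hj
        obtain ⟨-, hj2⟩ := hj
        rw [Finsupp.sub_apply, pairElt_apply, pairElt_apply]
        have c1 : ¬(e0 ∈ (mkp a b hab).1 ∧ j ∈ (mkp a b hab).1 ∧ e0 ≠ j) := by
          simp only [hmem, Fin.ext_iff, ne_eq]; omega
        have c2 : ¬(e1 ∈ (mkp a b hab).1 ∧ j ∈ (mkp a b hab).1 ∧ e1 ≠ j) := by
          simp only [hmem, Fin.ext_iff, ne_eq]; omega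
        rw [if_neg c1, if_neg c2, sub_zero]
      rw [Finset.sum_congr rfl hsum, Finset.sum_const_zero, smul_zero]
      exact hgen0 a b hab ha2 hb2
  ext s
  obtain ⟨a, b, hab, hs⟩ := Finset.card_eq_two.1 s.2
  have hseq : s = mkp a b hab := Subtype.ext hs
  have hvalne : a.val ≠ b.val := fun h => hab (Fin.ext h)
  rcases Nat.lt_or_ge a.val b.val with hlt | hge
  · rw [hseq]; exact main a b hab hlt
  · have hlt : b.val < a.val := by omega
    rw [hseq, mkp_comm]; exact main b a (Ne.symm hab) hlt

lemma pairElt_comm (i j : Fin d) : pairElt i j = pairElt j i := by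
  unfold pairElt
  rcases eq_or_ne i j with h | h
  · simp [h]
  · rw [dif_pos h, dif_pos h.symm]
    congr 1
    exact Subtype.ext (Finset.pair_comm i j)

lemma rho_pairElt (τ : Equiv.Perm (Fin d)) (i j : Fin d) :
    rp d τ (pairElt i j) = pairElt (τ i) (τ j) := by
  unfold pairElt
  rcases eq_or_ne i j with h | h
  · simp [h]
  · rw [dif_pos h, dif_pos (fun he => h (τ.injective he))]
    rw [rp_single]
    congr 1
    apply Subtype.ext
    show τ • ({i, j} : Finset (Fin d)) = {τ i, τ j}
    simp [Finset.smul_finset_insert, Finset.smul_finset_singleton, Equiv.Perm.smul_def]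

section part2
variable (hd : 3 ≤ d)

/-- Invariance of `M = Σ_{j≥1} e_{0,j}` under perms fixing `0`. -/
lemma sumM_invariant (h0 : (0:ℕ) < d) (τ : Equiv.Perm (Fin d)) (hτ : τ ⟨0, h0⟩ = ⟨0, h0⟩) :
    rp d τ (∑ j ∈ Finset.univ.filter (fun j : Fin d => 1 ≤ j.val), pairElt ⟨0, h0⟩ j)
      = ∑ j ∈ Finset.univ.filter (fun j : Fin d => 1 ≤ j.val), pairElt ⟨0, h0⟩ j := by
  rw [map_sum]
  have step : ∀ j, rp d τ (pairElt ⟨0, h0⟩ j) = pairElt ⟨0, h0⟩ (τ j) := by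
    intro j; rw [rho_pairElt, hτ]
  simp_rw [step]
  refine Finset.sum_equiv τ ?_ ?_
  · intro j
    simp only [Finset.mem_filter, Finset.mem_univ, true_and]
    constructor
    · intro hj
      by_contra hcon
      have : τ j = ⟨0, h0⟩ := Fin.ext (show (τ j).val = 0 by omega)
      have := τ.injective (this.trans hτ.symm)
      rw [this] at hj
      simp at hj
    · intro hj
      by_contra hcon
      have hj0 : j = ⟨0, h0⟩ := Fin.ext (show j.val = 0 by omega)
      rw [hj0, hτ] at hj
      simp at hj
  · intro j _
    rfl

lemma sumM_sigma (h0 : (0:ℕ) < d) (h1 : (1:ℕ) < d) :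
    rp d (Equiv.swap (⟨0, h0⟩ : Fin d) ⟨1, h1⟩)
        (∑ j ∈ Finset.univ.filter (fun j : Fin d => 1 ≤ j.val), pairElt ⟨0, h0⟩ j)
      - ∑ j ∈ Finset.univ.filter (fun j : Fin d => 1 ≤ j.val), pairElt ⟨0, h0⟩ j
    = ∑ j ∈ Finset.univ.filter (fun j : Fin d => 2 ≤ j.val),
        (pairElt ⟨1, h1⟩ j - pairElt ⟨0, h0⟩ j) := by
  set e0 : Fin d := ⟨0, h0⟩
  set e1 : Fin d := ⟨1, h1⟩
  set σ := Equiv.swap e0 e1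
  have hsplit : Finset.univ.filter (fun j : Fin d => 1 ≤ j.val)
      = insert e1 (Finset.univ.filter (fun j : Fin d => 2 ≤ j.val)) := by
    ext j
    simp only [Finset.mem_filter, Finset.mem_univ, true_and, Finset.mem_insert, Fin.ext_iff, e1]
    omega
  have hnotmem : e1 ∉ Finset.univ.filter (fun j : Fin d => 2 ≤ j.val) := by
    simp [Finset.mem_filter, e1]
  rw [hsplit, Finset.sum_insert hnotmem, map_add, rho_pairElt, map_sum]
  have hσ0 : σ e0 = e1 := Equiv.swap_apply_left _ _
  have hσ1 : σ e1 = e0 := Equiv.swap_apply_right _ _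
  rw [hσ0, hσ1, pairElt_comm e1 e0]
  have step : ∀ j ∈ Finset.univ.filter (fun j : Fin d => 2 ≤ j.val),
      rp d σ (pairElt e0 j) = pairElt e1 j := by
    intro j hj
    rw [Finset.mem_filter] at hj
    rw [rho_pairElt, hσ0, Equiv.swap_apply_of_ne_of_ne
      (Fin.ne_of_val_ne (show j.val ≠ 0 by omega)) (Fin.ne_of_val_ne (show j.val ≠ 1 by omega))]
  rw [Finset.sum_congr rfl step]
  rw [Finset.sum_sub_distrib]
  abel

end part2

lemma part2 (d : ℕ) (hd : 3 ≤ d) (h0 : 0 < d) (h1 : 1 < d)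
    (f : Equiv.Perm (Fin d) → (TwoSubsets d →₀ ℤ))
    (hf : ∀ τ σ : Equiv.Perm (Fin d), f (τ * σ) = f τ + rp d τ (f σ))
    (hvanish : ∀ (i : ℕ) (hi1 : 2 ≤ i) (hi2 : i < d),
      f (Equiv.swap ⟨i - 1, lt_of_le_of_lt (Nat.sub_le i 1) hi2⟩ ⟨i, hi2⟩) = 0)
    (c : ℤ)
    (hc : f (Equiv.swap ⟨0, h0⟩ ⟨1, h1⟩)
      = c • ∑ j ∈ Finset.univ.filter (fun j : Fin d => 2 ≤ j.val),
          (pairElt ⟨0, h0⟩ j - pairElt ⟨1, h1⟩ j)) :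
    ∀ τ : Equiv.Perm (Fin d),
      f τ = rp d τ ((-c) • ∑ j ∈ Finset.univ.filter (fun j : Fin d => 1 ≤ j.val),
            pairElt ⟨0, h0⟩ j)
          - (-c) • ∑ j ∈ Finset.univ.filter (fun j : Fin d => 1 ≤ j.val), pairElt ⟨0, h0⟩ j := by
  obtain ⟨n, rfl⟩ : ∃ n, d = n + 1 := ⟨d - 1, by omega⟩
  set M := ∑ j ∈ Finset.univ.filter (fun j : Fin (n+1) => 1 ≤ j.val), pairElt ⟨0, h0⟩ j with hM
  set m := (-c) • M with hm
  have hone : f 1 = 0 := by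
    have h := hf 1 1
    rw [mul_one, map_one, Module.End.one_apply] at h
    exact (left_eq_add.mp h)
  have hP1 : f 1 = rp (n+1) 1 m - m := by
    rw [map_one, Module.End.one_apply, sub_self, hone]
  have hPmul : ∀ x y : Equiv.Perm (Fin (n+1)),
      f x = rp (n+1) x m - m → f y = rp (n+1) y m - m →
      f (x*y) = rp (n+1) (x*y) m - m := by
    intro x y hx hy
    rw [hf x y, hx, hy, map_mul, Module.End.mul_apply, map_sub]
    abel
  have hPgen : ∀ i : Fin n, f (Equiv.swap i.castSucc i.succ)
      = rp (n+1) (Equiv.swap i.castSucc i.succ) m - m := by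
    intro i
    rcases Nat.eq_zero_or_pos i.val with hi0 | hi1
    · have hcs' : i.castSucc = (⟨0, h0⟩ : Fin (n+1)) := Fin.ext (by simp [hi0])
      have hsc' : i.succ = (⟨1, h1⟩ : Fin (n+1)) := Fin.ext (by simp [Fin.val_succ, hi0])
      rw [hcs', hsc', hc, hm, map_smul, ← smul_sub, hM, sumM_sigma h0 h1]
      have hneg : ∑ j ∈ Finset.univ.filter (fun j : Fin (n+1) => 2 ≤ j.val),
            (pairElt ⟨1, h1⟩ j - pairElt ⟨0, h0⟩ j)
          = - ∑ j ∈ Finset.univ.filter (fun j : Fin (n+1) => 2 ≤ j.val),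
            (pairElt ⟨0, h0⟩ j - pairElt ⟨1, h1⟩ j) := by
        rw [← Finset.sum_neg_distrib]
        exact Finset.sum_congr rfl (fun j _ => (neg_sub _ _).symm)
      rw [hneg, smul_neg, neg_smul, neg_neg]
    · have hcs : i.castSucc = (⟨i.val, by omega⟩ : Fin (n+1)) := Fin.ext rfl
      have hsc : i.succ = (⟨i.val + 1, by omega⟩ : Fin (n+1)) := Fin.ext rfl
      have hz : f (Equiv.swap (⟨i.val, by omega⟩ : Fin (n+1)) ⟨i.val + 1, by omega⟩) = 0 :=
        hvanish (i.val + 1) (by omega) (by omega)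
      rw [hcs, hsc, hz, hm, map_smul, ← smul_sub, hM,
        sumM_invariant h0 _ (Equiv.swap_apply_of_ne_of_ne
          (Fin.ne_of_val_ne (show 0 ≠ i.val by omega))
          (Fin.ne_of_val_ne (show 0 ≠ i.val + 1 by omega))),
        sub_self, smul_zero]
  intro τ
  have hmem : τ ∈ Submonoid.closure
      (Set.range fun i : Fin n ↦ Equiv.swap i.castSucc i.succ) := by
    rw [Equiv.Perm.mclosure_swap_castSucc_succ]; exact Submonoid.mem_top τ
  exact Submonoid.closure_induction
    (motive := fun x _ => f x = rp (n+1) x m - m)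
    (fun x hx => by obtain ⟨i, rfl⟩ := hx; exact hPgen i)
    hP1 (fun x y _ _ => hPmul x y) hmem


/-- Let `f : S_d → U_d` (`d ≥ 3`) be a crossed homomorphism with `f(σ_i) = 0` for all
adjacent transpositions `σ_i`, `i ≠ 1`.  Then there is `c : ℤ` with
`f(σ₁) = c • Σ_{j=3}^{d} (e_{1,j} − e_{2,j})`, and `f` is the principal crossed
homomorphism associated to `m = −c • Σ_{j=2}^{d} e_{1,j}`.
(Indices are `0`-based below: the paper's `σ_i` is `swap ⟨i−1⟩ ⟨i⟩`, its point `j` is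
`⟨j−1⟩`.) -/
theorem stmt_14 (d : ℕ) (hd : 3 ≤ d)
    (f : Equiv.Perm (Fin d) → (TwoSubsets d →₀ ℤ))
    (hf : ∀ τ σ : Equiv.Perm (Fin d),
      f (τ * σ) = f τ +
        (Representation.ofMulAction ℤ (Equiv.Perm (Fin d)) (TwoSubsets d) τ
          (MonoidAlgebra.ofCoeff (f σ))).coeff)
    (hvanish : ∀ (i : ℕ) (h1 : 2 ≤ i) (h2 : i < d),
      f (Equiv.swap ⟨i - 1, by omega⟩ ⟨i, h2⟩) = 0) :
    ∃ c : ℤ,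
      f (Equiv.swap ⟨0, by omega⟩ ⟨1, by omega⟩)
        = c • ∑ j ∈ Finset.univ.filter (fun j : Fin d => 2 ≤ j.val),
            (pairElt ⟨0, by omega⟩ j - pairElt ⟨1, by omega⟩ j) ∧
      ∀ τ : Equiv.Perm (Fin d),
        f τ = (Representation.ofMulAction ℤ (Equiv.Perm (Fin d)) (TwoSubsets d) τ
                (MonoidAlgebra.ofCoeff ((-c) • ∑ j ∈ Finset.univ.filter (fun j : Fin d => 1 ≤ j.val),
                  pairElt ⟨0, by omega⟩ j))).coeff
              - (-c) • ∑ j ∈ Finset.univ.filter (fun j : Fin d => 1 ≤ j.val),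
                  pairElt ⟨0, by omega⟩ j := by
  simp only [rp_bridge] at hf ⊢
  have h0 : (0:ℕ) < d := by omega
  have h1 : (1:ℕ) < d := by omega
  set σ := Equiv.swap (⟨0, h0⟩ : Fin d) ⟨1, h1⟩ with hσdef
  set v := f σ with hv
  have hone : f 1 = 0 := by
    have h := hf 1 1
    rw [mul_one, map_one, Module.End.one_apply] at h
    exact (left_eq_add.mp h)
  -- σ² = 1 gives ρ σ v = -v
  have hσv : rp d σ v = -v := by
    have h2 := hf σ σ
    rw [Equiv.swap_mul_self, hone] at h2
    exact eq_neg_of_add_eq_zero_right h2.symm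
  have hσpt : ∀ s : TwoSubsets d, v (Equiv.swap (⟨0, by omega⟩ : Fin d) ⟨1, by omega⟩ • s)
      = - v s := by
    intro s
    have hp := DFunLike.congr_fun hσv s
    rw [rp_apply_pt, hσdef, Equiv.swap_inv] at hp
    rw [show v (Equiv.swap (⟨0, by omega⟩ : Fin d) ⟨1, by omega⟩ • s)
        = v (Equiv.swap (⟨0, h0⟩ : Fin d) ⟨1, h1⟩ • s) from rfl, hp, Finsupp.neg_apply]
  have htpt : ∀ (k : ℕ) (h2 : 2 ≤ k) (hk : k + 1 < d) (s : TwoSubsets d),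
      v (Equiv.swap (⟨k, by omega⟩ : Fin d) ⟨k+1, hk⟩ • s) = v s := by
    intro k hk2 hk s
    have hft : f (Equiv.swap (⟨k, by omega⟩ : Fin d) ⟨k+1, hk⟩) = 0 :=
      hvanish (k+1) (by omega) hk
    have hcomm : σ * Equiv.swap (⟨k, by omega⟩ : Fin d) ⟨k+1, hk⟩
        = Equiv.swap (⟨k, by omega⟩ : Fin d) ⟨k+1, hk⟩ * σ := by
      have hdisj : Equiv.Perm.Disjoint σ (Equiv.swap (⟨k, by omega⟩ : Fin d) ⟨k+1, hk⟩) := by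
        intro x
        rcases Nat.lt_or_ge x.val 2 with hx | hx
        · right
          exact Equiv.swap_apply_of_ne_of_ne
            (Fin.ne_of_val_ne (show x.val ≠ k by omega))
            (Fin.ne_of_val_ne (show x.val ≠ k+1 by omega))
        · left
          exact Equiv.swap_apply_of_ne_of_ne
            (Fin.ne_of_val_ne (show x.val ≠ 0 by omega))
            (Fin.ne_of_val_ne (show x.val ≠ 1 by omega))
      exact hdisj.commute.eq
    have ha := hf σ (Equiv.swap (⟨k, by omega⟩ : Fin d) ⟨k+1, hk⟩)
    have hb := hf (Equiv.swap (⟨k, by omega⟩ : Fin d) ⟨k+1, hk⟩) σ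
    rw [hft, map_zero, add_zero] at ha
    rw [hft, zero_add] at hb
    have hkey : rp d (Equiv.swap (⟨k, by omega⟩ : Fin d) ⟨k+1, hk⟩) v = v := by
      rw [← hb, ← hcomm, ha]
    have hp := DFunLike.congr_fun hkey s
    rw [rp_apply_pt, Equiv.swap_inv] at hp
    exact hp
  have hp1 := part1 d hd v hσpt htpt
  refine ⟨v (mkp (⟨0, by omega⟩ : Fin d) ⟨2, by omega⟩
      (Fin.ne_of_val_ne (show 0 ≠ 2 by omega))), hp1, ?_⟩
  exact part2 d hd h0 h1 f hf hvanish _ hp1
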